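/- Let R be a complete local UFD with residue characteristic ≠ 2 and ρ: G → Aut_K(V) a 2-dimensional irreducible representation satisfying (Lat-fr), (Red), (G-dist). Suppose T ⊆ T' are stable free lattices with T'/T a cyclic R-module on which G acts through a character lifting ψ (with T'(ψ') denoting the ψ'-component). Then T(ψ') = T'(ψ') and ∏ᵢ 𝔭ᵢ^{aᵢ} T'(ψ) = T(ψ) where char_R(T'/T) = ∏ᵢ 𝔭ᵢ^{aᵢ}; that is, the 'odd' component of the lattice is unchanged and only the ψ-component shrinks. -/

import Mathlib

open IsLocalRing

/-- A prime ideal of height one. -/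
def IsHeightOnePrime {R : Type*} [CommRing R] (p : Ideal R) : Prop :=
  p.IsPrime ∧ p ≠ ⊥ ∧ ∀ q : Ideal R, q.IsPrime → q < p → q = ⊥

/-- The quotient `T'/T` of two lattices `T ≤ T'`, as an `R`-module. -/
abbrev quotMod {R V : Type*} [CommRing R] [AddCommGroup V] [Module R V]
    (T T' : Submodule R V) : Type _ :=
  T' ⧸ Submodule.comap T'.subtype T

/-- The projector `(f - b·id)/(a - b)` onto the `a`-eigenspace of `f`. -/
noncomputable def eigProj (R : Type*) {K V : Type*} [CommRing R] [Field K] [Algebra R K]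
    [AddCommGroup V] [Module K V] (f : V →ₗ[K] V) (a b : R) : V →ₗ[K] V :=
  (algebraMap R K (a - b))⁻¹ • (f - algebraMap R K b • (LinearMap.id : V →ₗ[K] V))

/-- Let `R` be a complete local UFD of residue characteristic `≠ 2` and
`ρ` two-dimensional irreducible, residually disjoint reducible, with a stable free
lattice. Suppose `T ⊆ T'` are stable free lattices with `T'/T` a cyclic `R`-module on
which `G` acts through a character lifting `ψ` (via a lift `t : G → R`), and with
`char_R(T'/T) = ∏ᵢ pᵢ^{aᵢ}` (i.e. `T'/T ≅ R/∏ᵢ pᵢ^{aᵢ}`). Then `T(ψ') = T'(ψ')` and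
`(∏ᵢ pᵢ^{aᵢ}) • T'(ψ) = T(ψ)`: the `ψ'`-component is unchanged and only the
`ψ`-component shrinks. -/
theorem eigcomponents_of_sublattice
    {R K V G : Type*} [CommRing R] [IsDomain R] [IsLocalRing R]
    [UniqueFactorizationMonoid R] [IsAdicComplete (maximalIdeal R) R]
    [Field K] [Algebra R K] [IsFractionRing R K]
    [AddCommGroup V] [Module K V] [Module R V] [IsScalarTower R K V] [Group G]
    (hchar : ringChar (R ⧸ maximalIdeal R) ≠ 2)
    (hdim : Module.finrank K V = 2)
    (ρ : Representation K G V)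
    (hirr : ∀ W : Submodule K V, (∀ g : G, ∀ v ∈ W, ρ g v ∈ W) → W = ⊥ ∨ W = ⊤)
    (tr : G → R) (htr : ∀ g, algebraMap R K (tr g) = LinearMap.trace K V (ρ g))
    (ψ ψ' : G →* (R ⧸ maximalIdeal R)ˣ) (hdist : ψ ≠ ψ')
    (hred : ∀ g, Ideal.Quotient.mk (maximalIdeal R) (tr g)
      = (ψ g : R ⧸ maximalIdeal R) + (ψ' g : R ⧸ maximalIdeal R))
    (g₀ : G) (hg₀ : ψ g₀ ≠ ψ' g₀)
    (lamψ lamψ' : R)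
    (hsum : lamψ + lamψ' = tr g₀)
    (hprod : algebraMap R K (lamψ * lamψ') = LinearMap.det (ρ g₀))
    (hlift : Ideal.Quotient.mk (maximalIdeal R) lamψ = (ψ g₀ : R ⧸ maximalIdeal R))
    (hlift' : Ideal.Quotient.mk (maximalIdeal R) lamψ' = (ψ' g₀ : R ⧸ maximalIdeal R))
    (r : ℕ) (p : Fin r → Ideal R) (hp : ∀ i, IsHeightOnePrime (p i))
    (a : Fin r → ℕ)
    (T T' : Submodule R V)
    (hTfg : T.FG) (hTspan : Submodule.span K (T : Set V) = ⊤)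
    (hTstab : ∀ g : G, ∀ v ∈ T, ρ g v ∈ T) (hTfree : Module.Free R T)
    (hT'fg : T'.FG) (hT'span : Submodule.span K (T' : Set V) = ⊤)
    (hT'stab : ∀ g : G, ∀ v ∈ T', ρ g v ∈ T') (hT'free : Module.Free R T')
    (hle : T ≤ T')
    -- `T'/T` is cyclic:
    (hcyc : ∃ w ∈ T', ∀ v ∈ T', ∃ c : R, v - c • w ∈ T)
    -- `G` acts on `T'/T` through a character lifting `ψ`, via the lift `t : G → R`:
    (t : G → R)
    (htlift : ∀ g, Ideal.Quotient.mk (maximalIdeal R) (t g)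
      = (ψ g : R ⧸ maximalIdeal R))
    (hact : ∀ g : G, ∀ v ∈ T', ρ g v - t g • v ∈ T)
    -- `char_R(T'/T) = ∏ᵢ pᵢ^{aᵢ}`:
    (hchariso : Nonempty (quotMod T T' ≃ₗ[R] R ⧸ (∏ i, (p i) ^ (a i) : Ideal R))) :
    Submodule.map ((eigProj R (ρ g₀) lamψ' lamψ).restrictScalars R) T
      = Submodule.map ((eigProj R (ρ g₀) lamψ' lamψ).restrictScalars R) T' ∧
    (∏ i, (p i) ^ (a i) : Ideal R) •
        Submodule.map ((eigProj R (ρ g₀) lamψ lamψ').restrictScalars R) T'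
      = Submodule.map ((eigProj R (ρ g₀) lamψ lamψ').restrictScalars R) T := by
  classical
  obtain ⟨eqv⟩ := hchariso
  set I : Ideal R := ∏ i, (p i) ^ (a i) with hIdef
  set f : V →ₗ[K] V := ρ g₀ with hfdef
  set σ : R →+* K := (algebraMap R K) with hσdef
  set c : K := σ lamψ with hcdef
  set c' : K := σ lamψ' with hc'def
  have hKinj : Function.Injective σ := IsFractionRing.injective R K
  -- the difference of eigenvalues is a unit
  have hunit : IsUnit (lamψ - lamψ') := by
    by_contra h
    have hm : lamψ - lamψ' ∈ maximalIdeal R := h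
    have heq : Ideal.Quotient.mk (maximalIdeal R) lamψ
        = Ideal.Quotient.mk (maximalIdeal R) lamψ' := by
      rwa [Ideal.Quotient.eq]
    exact hg₀ (Units.ext (by rw [← hlift, ← hlift', heq]))
  obtain ⟨ε, hε⟩ := hunit
  have hlamne : lamψ - lamψ' ≠ 0 := hε ▸ ε.ne_zero
  have hd : c - c' ≠ 0 := by
    rw [hcdef, hc'def, ← map_sub]
    intro h0
    exact hlamne (hKinj (by rw [h0, map_zero]))
  -- Cayley–Hamilton in dimension 2
  haveI : FiniteDimensional K V := FiniteDimensional.of_finrank_pos (by rw [hdim]; norm_num)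
  have htrf : c + c' = LinearMap.trace K V f := by
    rw [hcdef, hc'def, ← map_add, hsum, htr g₀, hfdef]
  have hdetf : c * c' = LinearMap.det f := by
    rw [hcdef, hc'def, ← map_mul, hfdef]; exact hprod
  have hCH : f * f - (c + c') • f + (c * c') • (1 : V →ₗ[K] V) = 0 := by
    let b : Module.Basis (Fin 2) K V := Module.finBasisOfFinrankEq K V hdim
    have hA : ∀ A : Matrix (Fin 2) (Fin 2) K, A * A - A.trace • A + A.det • 1 = 0 := by
      intro A
      ext i j
      fin_cases i <;> fin_cases j <;>
        simp [Matrix.mul_apply, Fin.sum_univ_two, Matrix.trace_fin_two, Matrix.det_fin_two,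
          Matrix.one_apply] <;> ring
    apply (LinearMap.toMatrix b b).injective
    simp only [map_add, map_sub, map_smul, LinearMap.toMatrix_mul, LinearMap.toMatrix_one,
      map_zero]
    rw [htrf, hdetf, LinearMap.trace_eq_matrix_trace K b, ← LinearMap.det_toMatrix b]
    exact hA _
  have expand : ∀ x y : K,
      (f - x • 1) * (f - y • 1) = f * f - (x + y) • f + (x * y) • (1 : V →ₗ[K] V) := by
    intro x y
    simp only [mul_sub, sub_mul, smul_mul_assoc, mul_smul_comm, one_mul, mul_one, smul_smul,
      add_smul]
    module
  have hQ : (f - c • 1) * (f - c' • 1) = 0 := by rw [expand, hCH]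
  have hQ' : (f - c' • 1) * (f - c • 1) = 0 := by
    rw [expand, add_comm c' c, mul_comm c' c, hCH]
  -- the projectors
  set π : V →ₗ[K] V := eigProj R (ρ g₀) lamψ lamψ' with hπdef
  set π' : V →ₗ[K] V := eigProj R (ρ g₀) lamψ' lamψ with hπ'def
  have hπ : π = (c - c')⁻¹ • (f - c' • 1) := by
    rw [hπdef, eigProj, map_sub]; rfl
  have hπ' : π' = (c' - c)⁻¹ • (f - c • 1) := by
    rw [hπ'def, eigProj, map_sub]; rfl
  have hd' : c' - c ≠ 0 := fun h => hd (by rw [← neg_sub c' c, h, neg_zero])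
  have hππ' : π * π' = 0 := by
    rw [hπ, hπ', smul_mul_assoc, mul_smul_comm, hQ', smul_zero, smul_zero]
  have hπ'π : π' * π = 0 := by
    rw [hπ, hπ', smul_mul_assoc, mul_smul_comm, hQ, smul_zero, smul_zero]
  have hone : π + π' = 1 := by
    rw [hπ, hπ', show (c' - c)⁻¹ = -(c - c')⁻¹ by rw [← neg_sub c c', inv_neg], neg_smul,
      ← sub_eq_add_neg, ← smul_sub,
      show (f - c' • 1) - (f - c • 1) = (c - c') • (1 : V →ₗ[K] V) by
        rw [sub_smul]; module,
      smul_smul, inv_mul_cancel₀ hd, one_smul]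
  have hππ : π * π = π := by
    have h2 : π * (π + π') = π * 1 := by rw [hone]
    rwa [mul_add, hππ', add_zero, mul_one] at h2
  have hπ'π' : π' * π' = π' := by
    have h2 : π' * (π + π') = π' * 1 := by rw [hone]
    rwa [mul_add, hπ'π, zero_add, mul_one] at h2
  have hkerπ : (f - c • 1) * π = 0 := by
    rw [hπ, mul_smul_comm, hQ, smul_zero]
  have hsplit : ∀ v : V, π v + π' v = v := fun v => by
    have := DFunLike.congr_fun hone v
    simpa using this
  have hidem : ∀ v : V, π (π v) = π v := fun v => by
    have := DFunLike.congr_fun hππ v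
    simpa [Module.End.mul_apply] using this
  have hidem' : ∀ v : V, π' (π' v) = π' v := fun v => by
    have := DFunLike.congr_fun hπ'π' v
    simpa [Module.End.mul_apply] using this
  -- explicit formulas with R-scalars
  have hinv : (c - c')⁻¹ = σ (↑ε⁻¹ : R) := by
    symm
    apply eq_inv_of_mul_eq_one_left
    rw [hcdef, hc'def, ← map_sub, ← hε, ← map_mul, Units.inv_mul, map_one]
  have hinv' : (c' - c)⁻¹ = σ (↑(-ε)⁻¹ : R) := by
    symm
    apply eq_inv_of_mul_eq_one_left
    have : ((-ε : Rˣ) : R) = lamψ' - lamψ := by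
      rw [Units.val_neg, hε, neg_sub]
    rw [hc'def, hcdef, ← map_sub, ← this, ← map_mul, Units.inv_mul, map_one]
  have hπR : ∀ v : V, π v = (↑ε⁻¹ : R) • (f v - lamψ' • v) := by
    intro v
    rw [hπ]
    simp only [LinearMap.smul_apply, LinearMap.sub_apply, Module.End.one_apply]
    rw [hinv, algebraMap_smul, hc'def, algebraMap_smul]
  have hπ'R : ∀ v : V, π' v = (↑(-ε)⁻¹ : R) • (f v - lamψ • v) := by
    intro v
    rw [hπ']
    simp only [LinearMap.smul_apply, LinearMap.sub_apply, Module.End.one_apply]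
    rw [hinv', algebraMap_smul, hcdef, algebraMap_smul]
  -- stability of T and T' under the projectors
  have hstab : ∀ (S : Submodule R V), (∀ v ∈ S, ρ g₀ v ∈ S) →
      (∀ v ∈ S, π v ∈ S) ∧ (∀ v ∈ S, π' v ∈ S) := by
    intro S hS
    constructor
    · intro v hv
      rw [hπR]
      exact S.smul_mem _ (sub_mem (hS v hv) (S.smul_mem _ hv))
    · intro v hv
      rw [hπ'R]
      exact S.smul_mem _ (sub_mem (hS v hv) (S.smul_mem _ hv))
  have hTπ : ∀ v ∈ T, π v ∈ T := (hstab T (hTstab g₀)).1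
  have hTπ' : ∀ v ∈ T, π' v ∈ T := (hstab T (hTstab g₀)).2
  have hT'π : ∀ v ∈ T', π v ∈ T' := (hstab T' (hT'stab g₀)).1
  have hT'π' : ∀ v ∈ T', π' v ∈ T' := (hstab T' (hT'stab g₀)).2
  -- Claim 1 : the ψ'-components agree
  have claim1 : Submodule.map (π'.restrictScalars R) T
      = Submodule.map (π'.restrictScalars R) T' := by
    refine le_antisymm (Submodule.map_mono hle) ?_
    refine Submodule.le_of_le_smul_of_le_jacobson_bot (hT'fg.map _)
      (IsLocalRing.maximalIdeal_le_jacobson ⊥) ?_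
    rintro x ⟨v, hv, rfl⟩
    simp only [LinearMap.restrictScalars_apply]
    have hx1 : f v - t g₀ • v ∈ T := hact g₀ v hv
    have hmem : (t g₀ - lamψ) ∈ maximalIdeal R := by
      rw [← Ideal.Quotient.eq_zero_iff_mem, map_sub, htlift g₀, hlift, sub_self]
    have harr : f v - lamψ • v = (f v - t g₀ • v) + (t g₀ - lamψ) • v := by
      rw [sub_smul]; module
    have keyv : π' v
        = (↑(-ε)⁻¹ : R) • (π' (f v - t g₀ • v) + (t g₀ - lamψ) • π' v) := by
      conv_lhs => rw [← hidem' v, hπ'R v]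
      rw [LinearMap.map_smul_of_tower, harr, map_add, LinearMap.map_smul_of_tower]
    rw [keyv]
    refine Submodule.smul_mem _ _ (add_mem ?_ ?_)
    · exact Submodule.mem_sup_left ⟨f v - t g₀ • v, hx1, rfl⟩
    · exact Submodule.mem_sup_right
        (Submodule.smul_mem_smul hmem ⟨v, hv, rfl⟩)
  -- annihilator of T'/T is I
  have hann : Module.annihilator R (quotMod T T') = I := by
    rw [eqv.annihilator_eq, Ideal.annihilator_quotient]
  have hI_kill : ∀ d ∈ I, ∀ v ∈ T', d • v ∈ T := by
    intro d hd v hv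
    rw [← hann, Module.mem_annihilator] at hd
    have h0 := hd (Submodule.Quotient.mk (⟨v, hv⟩ : T'))
    rw [← Submodule.Quotient.mk_smul, Submodule.Quotient.mk_eq_zero] at h0
    exact h0
  have hkill_I : ∀ d : R, (∀ v ∈ T', d • v ∈ T) → d ∈ I := by
    intro d hdv
    rw [← hann, Module.mem_annihilator]
    intro x
    obtain ⟨⟨v, hv⟩, rfl⟩ := Submodule.Quotient.mk_surjective _ x
    rw [← Submodule.Quotient.mk_smul, Submodule.Quotient.mk_eq_zero]
    exact hdv v hv
  -- the ψ-eigenspace has dimension ≤ 1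
  set W : Submodule K V := LinearMap.ker (f - c • 1) with hWdef
  have hWmem : ∀ v : V, π v ∈ W := by
    intro v
    rw [hWdef, LinearMap.mem_ker]
    have := DFunLike.congr_fun hkerπ v
    simpa [Module.End.mul_apply] using this
  have hWmem2 : ∀ x ∈ Submodule.map (π.restrictScalars R) T', x ∈ W := by
    rintro x ⟨v, hv, rfl⟩
    exact hWmem v
  have hWne : W ≠ ⊤ := by
    intro htop
    have hf0 : f - c • 1 = 0 := LinearMap.ker_eq_top.mp htop
    have hfc : f = c • (1 : V →ₗ[K] V) := by rwa [sub_eq_zero] at hf0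
    have h2 : c + c' = c * 2 := by
      rw [htrf, hfc, map_smul, LinearMap.trace_one, hdim, smul_eq_mul]
      norm_num
    have : c' = c := by
      rw [mul_two] at h2
      exact add_left_cancel h2
    exact hd (by rw [this, sub_self])
  have hWrank : Module.finrank K W ≤ 1 := by
    have hlt := Submodule.finrank_lt hWne
    rw [hdim] at hlt
    omega
  -- the ψ-component of T' is cyclic
  set Mψ : Submodule R V := Submodule.map (π.restrictScalars R) T' with hMdef
  have hMT' : Mψ ≤ T' := by
    rintro x ⟨v, hv, rfl⟩
    exact hT'π v hv
  have hMfix : ∀ x ∈ Mψ, π x = x := by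
    rintro x ⟨v, hv, rfl⟩
    exact hidem v
  haveI : Module.Projective R T' := by
    haveI := hT'free
    infer_instance
  have hcodo : ∀ x : T', ((π.restrictScalars R).comp T'.subtype) x ∈ Mψ := by
    intro x
    exact ⟨↑x, x.2, rfl⟩
  haveI hproj : Module.Projective R Mψ :=
    Module.Projective.of_split (Submodule.inclusion hMT')
      (LinearMap.codRestrict Mψ ((π.restrictScalars R).comp T'.subtype) hcodo)
      (by
        refine LinearMap.ext fun x => Subtype.ext ?_
        exact hMfix ↑x x.2)
  haveI : Module.Finite R Mψ := Module.Finite.iff_fg.mpr (hT'fg.map _)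
  haveI : Module.FinitePresentation R Mψ := Module.finitePresentation_of_projective R Mψ
  haveI : Module.Free R Mψ := Module.free_of_flat_of_isLocalRing
  obtain ⟨z, hz⟩ : ∃ z, Mψ = Submodule.span R {z} := by
    set ι := Module.Free.ChooseBasisIndex R Mψ with hιdef
    let bM := Module.Free.chooseBasis R Mψ
    have hliR : LinearIndependent R (fun i : ι => ((bM i : Mψ) : V)) :=
      bM.linearIndependent.map' Mψ.subtype (Submodule.ker_subtype _)
    have hliK : LinearIndependent K (fun i : ι => ((bM i : Mψ) : V)) :=
      hliR.localization K (nonZeroDivisors R)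
    have hliW : LinearIndependent K
        (fun i : ι => (⟨((bM i : Mψ) : V), hWmem2 _ (bM i).2⟩ : W)) := by
      apply LinearIndependent.of_comp W.subtype
      convert hliK
      rfl
    have hcard : Fintype.card ι ≤ 1 :=
      le_trans hliW.fintype_card_le_finrank hWrank
    have hMspan : Mψ = Submodule.span R (Set.range fun i : ι => ((bM i : Mψ) : V)) := by
      conv_lhs => rw [← Submodule.map_subtype_top Mψ, ← bM.span_eq]
      rw [Submodule.map_span, ← Set.range_comp]
      rfl
    cases isEmpty_or_nonempty ι with
    | inl h =>
      refine ⟨0, ?_⟩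
      rw [hMspan, Set.range_eq_empty, Submodule.span_empty, Submodule.span_zero_singleton]
    | inr h =>
      haveI : Subsingleton ι := Fintype.card_le_one_iff_subsingleton.mp hcard
      obtain ⟨i0⟩ := h
      refine ⟨((bM i0 : Mψ) : V), hMspan.trans (congrArg _ ?_)⟩
      ext x
      simp only [Set.mem_range, Set.mem_singleton_iff]
      constructor
      · rintro ⟨i, rfl⟩
        rw [Subsingleton.elim i i0]
      · rintro rfl
        exact ⟨i0, rfl⟩
  have hzM : z ∈ Mψ := by rw [hz]; exact Submodule.mem_span_singleton_self z
  refine ⟨claim1, ?_⟩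
  -- the map of the ψ-component
  apply le_antisymm
  · refine Submodule.smul_le.mpr ?_
    rintro d hdI x ⟨v, hv, rfl⟩
    simp only [LinearMap.restrictScalars_apply]
    refine ⟨d • v, hI_kill d hdI v hv, ?_⟩
    simp only [LinearMap.restrictScalars_apply, LinearMap.map_smul_of_tower]
  · intro n hn
    have hnT : n ∈ T := by
      obtain ⟨u, hu, rfl⟩ := hn
      exact hTπ u hu
    have hnM : n ∈ Mψ := Submodule.map_mono hle hn
    rw [hz] at hnM
    obtain ⟨d, hdz⟩ := Submodule.mem_span_singleton.mp hnM
    have hdzT : d • z ∈ T := by rw [hdz]; exact hnT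
    have hdI : d ∈ I := by
      apply hkill_I
      intro v hv
      have h1 : π' v ∈ T := by
        have hmem' : π' v ∈ Submodule.map (π'.restrictScalars R) T' := ⟨v, hv, rfl⟩
        rw [← claim1] at hmem'
        obtain ⟨u, hu, huv⟩ := hmem'
        rw [← huv]
        exact hTπ' u hu
      have h2 : π v ∈ Submodule.span R {z} := by
        rw [← hz]; exact ⟨v, hv, rfl⟩
      obtain ⟨d', hd''⟩ := Submodule.mem_span_singleton.mp h2
      have hcalc : d • v = d' • (d • z) + d • π' v := by
        conv_lhs => rw [← hsplit v]
        rw [smul_add, ← hd'', smul_comm d d' z]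
      rw [hcalc]
      exact add_mem (T.smul_mem _ hdzT) (T.smul_mem _ h1)
    rw [← hdz]
    exact Submodule.smul_mem_smul hdI hzM
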